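/- Let x ∈ ℝⁿ have all entries strictly positive, let U be a real n×q matrix of full column rank, and let A = diag(x)·U·(Uᵀ·diag(x)·U)⁻¹·Uᵀ. Then every diagonal entry of A lies in the unit interval: 0 ≤ A_{ii} ≤ 1 for all i. -/

import Mathlib

open Matrix

theorem stmt10 {n q : ℕ} (hn : 0 < n) (hq : 0 < q)
    (x : Fin n → ℝ) (hx : ∀ i, 0 < x i)
    (U : Matrix (Fin n) (Fin q) ℝ)
    (hU : LinearIndependent ℝ (fun j : Fin q => fun i : Fin n => U i j)) :
    let A := Matrix.diagonal x * U * (Uᵀ * Matrix.diagonal x * U)⁻¹ * Uᵀ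
    ∀ i : Fin n, A i i ∈ Set.Icc (0 : ℝ) 1 := by
  intro A i
  set D := Matrix.diagonal x with hD
  set M := Uᵀ * D * U with hM
  -- M is symmetric
  have hMsym : Mᵀ = M := by
    rw [hM, hD, Matrix.transpose_mul, Matrix.transpose_mul, Matrix.transpose_transpose,
      Matrix.diagonal_transpose, Matrix.mul_assoc]
  -- M is PosDef
  have hMpd : M.PosDef := by
    rw [Matrix.posDef_iff_dotProduct_mulVec]
    constructor
    · rw [Matrix.IsHermitian, conjTranspose_eq_transpose_of_trivial, hMsym]
    · intro y hy
      have key : star y ⬝ᵥ (M *ᵥ y) = ∑ k, x k * ((U *ᵥ y) k)^2 := by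
        rw [star_trivial, show M *ᵥ y = Uᵀ *ᵥ (D *ᵥ (U *ᵥ y)) by
            rw [Matrix.mulVec_mulVec, Matrix.mulVec_mulVec],
          Matrix.dotProduct_mulVec, Matrix.vecMul_transpose]
        rw [hD]
        simp only [dotProduct, Matrix.mulVec_diagonal]
        exact Finset.sum_congr rfl fun k _ => by ring
      rw [key]
      have hz : U *ᵥ y ≠ 0 := by
        intro h0
        apply hy
        have := Fintype.linearIndependent_iff.mp hU y ?_
        · funext j; exact this j
        · funext i
          have : (U *ᵥ y) i = 0 := by rw [h0]; rfl
          simpa [Matrix.mulVec, dotProduct, mul_comm] using this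
      obtain ⟨k, hk⟩ : ∃ k, (U *ᵥ y) k ≠ 0 := by
        by_contra h; push_neg at h; exact hz (funext h)
      apply Finset.sum_pos' (fun j _ => mul_nonneg (hx j).le (sq_nonneg _))
      exact ⟨k, Finset.mem_univ k, mul_pos (hx k) (by positivity)⟩
  have hdet : IsUnit M.det := hMpd.det_pos.ne'.isUnit
  have hMinv : M * M⁻¹ = 1 := Matrix.mul_nonsing_inv M hdet
  have hMinvsym : (M⁻¹)ᵀ = M⁻¹ := by rw [Matrix.transpose_nonsing_inv, hMsym]
  set v := U * M⁻¹ * Uᵀ with hv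
  have hvsym : ∀ a b, v a b = v b a := by
    intro a b
    have : vᵀ = v := by
      rw [hv, Matrix.transpose_mul, Matrix.transpose_mul, Matrix.transpose_transpose,
        hMinvsym, Matrix.mul_assoc]
    conv_lhs => rw [← this]
    rfl
  have hAv : A = D * v := by
    show D * U * (Uᵀ * D * U)⁻¹ * Uᵀ = D * v
    rw [hv, show Uᵀ * D * U = M from rfl]; simp only [Matrix.mul_assoc]
  have hAik : ∀ a b, A a b = x a * v a b := by
    intro a b; rw [hAv, hD]; simp [Matrix.diagonal_mul]
  -- idempotency
  have hidem : A * A = A := by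
    show A * A = A
    have : A = D * U * M⁻¹ * Uᵀ := rfl
    calc A * A = D * U * (M⁻¹ * (Uᵀ * (D * U))) * (M⁻¹ * Uᵀ) := by
          rw [this]; simp only [Matrix.mul_assoc]
      _ = D * U * (M⁻¹ * M) * (M⁻¹ * Uᵀ) := by
          rw [show Uᵀ * (D * U) = M by rw [hM, Matrix.mul_assoc]]
      _ = A := by
          rw [Matrix.nonsing_inv_mul M hdet, Matrix.mul_one, this]; simp only [Matrix.mul_assoc]
  have hsum : A i i = ∑ k, x i * x k * (v i k)^2 := by
    conv_lhs => rw [← hidem]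
    rw [Matrix.mul_apply]
    apply Finset.sum_congr rfl
    intro k _
    rw [hAik, hAik, hvsym k i]
    ring
  have h0 : 0 ≤ A i i := by
    rw [hsum]
    apply Finset.sum_nonneg
    intro k _
    have := (hx i).le
    have := (hx k).le
    positivity
  have hsq : A i i ^ 2 ≤ A i i := by
    conv_rhs => rw [hsum]
    have : A i i ^ 2 = x i * x i * (v i i)^2 := by rw [hAik]; ring
    rw [this]
    apply Finset.single_le_sum (f := fun k => x i * x k * (v i k)^2)
      (fun k _ => by have := (hx i).le; have := (hx k).le; positivity) (Finset.mem_univ i)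
  exact ⟨h0, by nlinarith⟩
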